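/- Let 1 < p ≤ q ≤ ∞. Suppose the delay system ẋ(t) = f(x_t) is forward complete on C⁰ and there exists σ ∈ KL such that ‖φ(t,x₀)‖_{C^{0,1−1/p}} ≤ σ(‖x₀‖_{C^{0,1−1/p}}, t) for all t ≥ 0 and all x₀ ∈ C^{0,1−1/p}. Then there exists ω ∈ KL such that ‖φ(t,x₀)‖_{C^{0,1−1/q}} ≤ ω(‖x₀‖_{C^{0,1−1/q}}, t) for all t ≥ 0 and all x₀ ∈ C^{0,1−1/q}. -/

import Mathlib

open Set MeasureTheory Filter Topology
open scoped ENNReal NNReal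

noncomputable section

abbrev Vec (n : ℕ) := EuclideanSpace ℝ (Fin n)

variable {n : ℕ}

/-- The segment `x_t` of a history `x : ℝ → ℝⁿ`, i.e. `x_t(s) = x(t+s)`
(only its values on `[-r,0]` are relevant). -/
def seg (r : ℝ) (x : ℝ → Vec n) (t : ℝ) : ℝ → Vec n := fun s => x (t + s)

/-- Sup norm over `[-r,0]`. -/
def supN (r : ℝ) (g : ℝ → Vec n) : ℝ := sSup ((fun s => ‖g s‖) '' Icc (-r) 0)

/-- Membership in `C⁰ = C([-r,0];ℝⁿ)`. -/
def MemC0 (r : ℝ) (g : ℝ → Vec n) : Prop := ContinuousOn g (Icc (-r) 0)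

/-- `f` vanishes at `0`, depends only on the values of its argument on `[-r,0]`,
and is Lipschitz on bounded subsets of `C⁰` with a nondecreasing (nonnegative)
modulus `L`. -/
def GoodRHS (r : ℝ) (f : (ℝ → Vec n) → Vec n) (L : ℝ → ℝ) : Prop :=
  f 0 = 0 ∧
  (∀ x y : ℝ → Vec n, EqOn x y (Icc (-r) 0) → f x = f y) ∧
  Monotone L ∧ (∀ s : ℝ, 0 ≤ L s) ∧
  ∀ R : ℝ, ∀ x y : ℝ → Vec n, MemC0 r x → MemC0 r y → supN r x ≤ R → supN r y ≤ R →
    ‖f x - f y‖ ≤ L R * supN r (x - y)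

/-- `x : ℝ → ℝⁿ` is a solution on `[-r, b)` (with `b ∈ (0,∞]` an extended
nonnegative real) of the delay system `ẋ(t) = f(x_t)` with initial condition `x0`:
it is continuous on `[-r,b)`, coincides with `x0` on `[-r,0]`, and satisfies the
integral equation `x(t) = x(0) + ∫₀ᵗ f(x_s) ds` on `[0,b)`. -/
def IsSol (r : ℝ) (f : (ℝ → Vec n) → Vec n) (x0 x : ℝ → Vec n) (b : ℝ≥0∞) : Prop :=
  ContinuousOn x {t : ℝ | -r ≤ t ∧ ENNReal.ofReal t < b} ∧
  EqOn x x0 (Icc (-r) 0) ∧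
  ∀ t : ℝ, 0 ≤ t → ENNReal.ofReal t < b → x t = x 0 + ∫ s in (0:ℝ)..t, f (seg r x s)

/-- Class `KL` functions `σ : [0,∞)×[0,∞) → [0,∞)`. -/
def ClassKL (σ : ℝ → ℝ → ℝ) : Prop :=
  (∀ s t : ℝ, 0 ≤ s → 0 ≤ t → 0 ≤ σ s t) ∧
  (∀ t : ℝ, 0 ≤ t →
    ContinuousOn (fun s => σ s t) (Ici 0) ∧ StrictMonoOn (fun s => σ s t) (Ici 0) ∧
      σ 0 t = 0) ∧
  (∀ s : ℝ, 0 ≤ s →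
    AntitoneOn (fun t => σ s t) (Ici 0) ∧ Tendsto (fun t => σ s t) atTop (nhds 0))

/-- Class `K∞` functions `a : [0,∞) → [0,∞)`. -/
def ClassKInf (a : ℝ → ℝ) : Prop :=
  (∀ s : ℝ, 0 ≤ s → 0 ≤ a s) ∧ ContinuousOn a (Ici 0) ∧ StrictMonoOn a (Ici 0) ∧
  a 0 = 0 ∧ Tendsto a atTop atTop

/-- The set of Hölder difference quotients `‖g t - g s‖ / |t-s|^α` over a set `S`. -/
def hRatios (α : ℝ) (S : Set ℝ) (g : ℝ → Vec n) : Set ℝ :=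
  {c | ∃ t ∈ S, ∃ s ∈ S, t ≠ s ∧ c = ‖g t - g s‖ / |t - s| ^ α}

/-- Membership in the Hölder space `C^{0,α}([-r,0])`. -/
def MemHol (r α : ℝ) (g : ℝ → Vec n) : Prop :=
  MemC0 r g ∧ BddAbove (hRatios α (Icc (-r) 0) g)

/-- The Hölder norm `max(‖g‖_∞, [g]_α)`. -/
def holderNorm (r α : ℝ) (g : ℝ → Vec n) : ℝ :=
  max (supN r g) (sSup (hRatios α (Icc (-r) 0) g))

/-- Membership in the Sobolev space `W^{1,p}([-r,0])`: `g` is absolutely continuous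
on `[-r,0]` (i.e. the integral of an integrable function `d`, which is then its a.e.
derivative) with `d ∈ L^p((-r,0))`. -/
def MemW (r : ℝ) (p : ℝ≥0∞) (g : ℝ → Vec n) : Prop :=
  ∃ d : ℝ → Vec n, IntegrableOn d (Icc (-r) 0) ∧
    eLpNorm d p (volume.restrict (Ioo (-r) 0)) < ⊤ ∧
    ∀ t ∈ Icc (-r) 0, g t = g (-r) + ∫ s in (-r)..t, d s

/-- The Sobolev norm `‖g‖_∞ + ‖ġ‖_p`; for an absolutely continuous `g` the a.e.
derivative coincides a.e. on `(-r,0)` with `deriv g`. -/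
def sobNorm (r : ℝ) (p : ℝ≥0∞) (g : ℝ → Vec n) : ℝ :=
  supN r g + (eLpNorm (deriv g) p (volume.restrict (Ioo (-r) 0))).toReal

/-- The Hölder exponent `1 - 1/p`, with the convention `1/∞ = 0`. -/
def hexp (p : ℝ≥0∞) : ℝ := 1 - (p.toReal)⁻¹

-- ===================== auxiliary lemmas =====================

lemma supN_le {r : ℝ} (hr : 0 < r) {g : ℝ → Vec n} {M : ℝ}
    (h : ∀ u ∈ Icc (-r) 0, ‖g u‖ ≤ M) : supN r g ≤ M := by
  apply csSup_le
  · exact (Set.nonempty_Icc.2 (by linarith)).image _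
  · rintro c ⟨u, hu, rfl⟩; exact h u hu

lemma le_supN {r : ℝ} {g : ℝ → Vec n} (hb : BddAbove ((fun s => ‖g s‖) '' Icc (-r) 0))
    {u : ℝ} (hu : u ∈ Icc (-r) 0) : ‖g u‖ ≤ supN r g :=
  le_csSup hb ⟨u, hu, rfl⟩

lemma le_supN_of_cont {r : ℝ} {g : ℝ → Vec n} (hg : MemC0 r g)
    {u : ℝ} (hu : u ∈ Icc (-r) 0) : ‖g u‖ ≤ supN r g := by
  apply le_supN ?_ hu
  have := (isCompact_Icc.image_of_continuousOn (continuous_norm.comp_continuousOn hg)).bddAbove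
  simpa [Set.image_comp] using this

lemma supN_nonneg {r : ℝ} (hr : 0 < r) {g : ℝ → Vec n} (hg : MemC0 r g) : 0 ≤ supN r g :=
  le_trans (norm_nonneg _) (le_supN_of_cont hg ⟨le_refl _, by linarith⟩)

lemma supN_zero {r : ℝ} (hr : 0 < r) : supN r (0 : ℝ → Vec n) = 0 := by
  unfold supN
  have : (fun s => ‖(0 : ℝ → Vec n) s‖) '' Icc (-r) 0 = {0} := by
    apply Set.Subsingleton.eq_singleton_of_mem
    · rintro a ⟨u, _, rfl⟩ b ⟨v, _, rfl⟩; simp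
    · exact ⟨0, ⟨by linarith, le_refl _⟩, by simp⟩
  rw [this, csSup_singleton]

lemma hRatios_nonempty {r : ℝ} (α : ℝ) (hr : 0 < r) (g : ℝ → Vec n) :
    (hRatios α (Icc (-r) 0) g).Nonempty :=
  ⟨_, 0, ⟨by linarith, le_refl _⟩, -r, ⟨le_refl _, by linarith⟩, by intro h; linarith [h.symm ▸ hr], rfl⟩

lemma hRatios_mem_nonneg {α : ℝ} {S : Set ℝ} {g : ℝ → Vec n} {c : ℝ} (hc : c ∈ hRatios α S g) :
    0 ≤ c := by
  obtain ⟨t, _, s, _, _, rfl⟩ := hc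
  positivity

lemma sSup_hRatios_nonneg {r α : ℝ} (hr : 0 < r) {g : ℝ → Vec n}
    (hb : BddAbove (hRatios α (Icc (-r) 0) g)) : 0 ≤ sSup (hRatios α (Icc (-r) 0) g) := by
  obtain ⟨c, hc⟩ := hRatios_nonempty α hr g
  exact le_trans (hRatios_mem_nonneg hc) (le_csSup hb hc)

lemma sSup_hRatios_le {r α : ℝ} (hr : 0 < r) {g : ℝ → Vec n} {M : ℝ}
    (h : ∀ u ∈ Icc (-r) 0, ∀ v ∈ Icc (-r) 0, u ≠ v → ‖g u - g v‖ / |u - v| ^ α ≤ M) :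
    sSup (hRatios α (Icc (-r) 0) g) ≤ M := by
  apply csSup_le (hRatios_nonempty α hr g)
  rintro c ⟨u, hu, v, hv, huv, rfl⟩
  exact h u hu v hv huv

lemma holderNorm_nonneg {r : ℝ} (α : ℝ) (hr : 0 < r) {g : ℝ → Vec n} (hg : MemC0 r g) :
    0 ≤ holderNorm r α g :=
  le_trans (supN_nonneg hr hg) (le_max_left _ _)

-- ===================== continuous majorant of L =====================

def ell (L : ℝ → ℝ) : ℝ → ℝ := fun u => ∫ w in (0:ℝ)..1, L (u + w)

section ell
variable {L : ℝ → ℝ} (hL : Monotone L) (hL0 : ∀ s, 0 ≤ L s)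

include hL in
lemma ell_eq (u : ℝ) : ell L u = (∫ w in (0:ℝ)..(u+1), L w) - ∫ w in (0:ℝ)..u, L w := by
  unfold ell
  rw [intervalIntegral.integral_comp_add_left L u]
  rw [intervalIntegral.integral_interval_sub_left hL.intervalIntegrable hL.intervalIntegrable]
  norm_num

include hL in
lemma ell_continuous : Continuous (ell L) := by
  have hF : Continuous fun b => ∫ w in (0:ℝ)..b, L w :=
    intervalIntegral.continuous_primitive (fun a b => hL.intervalIntegrable) 0
  have : Continuous fun u => (∫ w in (0:ℝ)..(u+1), L w) - ∫ w in (0:ℝ)..u, L w :=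
    (hF.comp (continuous_id.add continuous_const)).sub hF
  exact this.congr (fun u => (ell_eq hL u).symm)

include hL in
lemma ell_mono : Monotone (ell L) := by
  intro u v huv
  unfold ell
  have h1 : Monotone (fun w => L (u + w)) := fun a b h => hL (by simpa using h)
  have h2 : Monotone (fun w => L (v + w)) := fun a b h => hL (by simpa using h)
  apply intervalIntegral.integral_mono_on (by norm_num) h1.intervalIntegrable h2.intervalIntegrable
  intro w _
  exact hL (by linarith)

include hL in
lemma le_ell (u : ℝ) : L u ≤ ell L u := by
  have h1 : Monotone (fun w => L (u + w)) := fun a b h => hL (by simpa using h)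
  have : (∫ (_ : ℝ) in (0:ℝ)..1, L u) ≤ ∫ w in (0:ℝ)..1, L (u + w) := by
    apply intervalIntegral.integral_mono_on (by norm_num) intervalIntegrable_const
      h1.intervalIntegrable
    intro w hw
    exact hL (by linarith [hw.1])
  unfold ell
  simpa using this

include hL hL0 in
lemma ell_nonneg (u : ℝ) : 0 ≤ ell L u := le_trans (hL0 u) (le_ell hL u)

end ell
-- ===================== solution regularity =====================

lemma seg_memC0 {r : ℝ} {x : ℝ → Vec n} (hx : ContinuousOn x (Ici (-r))) {s : ℝ}
    (hs : 0 ≤ s) : MemC0 r (seg r x s) := by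
  apply hx.comp (continuous_const.add continuous_id).continuousOn
  intro u hu
  have h1 := hu.1
  simp only [mem_Ici, id_eq, Pi.add_apply]
  linarith

lemma g_contOn {r : ℝ} (hr : 0 < r) {f : (ℝ → Vec n) → Vec n} {L : ℝ → ℝ}
    (hLnn : ∀ s, 0 ≤ L s)
    (hfLip : ∀ R : ℝ, ∀ x y : ℝ → Vec n, MemC0 r x → MemC0 r y → supN r x ≤ R → supN r y ≤ R →
      ‖f x - f y‖ ≤ L R * supN r (x - y))
    {x : ℝ → Vec n} (hx : ContinuousOn x (Ici (-r))) :
    ContinuousOn (fun s => f (seg r x s)) (Ici 0) := by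
  intro t₀ ht₀
  rw [Metric.continuousWithinAt_iff]
  intro ε hε
  set T := t₀ + 1 with hT
  have hxK : ContinuousOn x (Icc (-r) T) := hx.mono (fun y hy => hy.1)
  obtain ⟨M, hM⟩ : ∃ M, ∀ y ∈ Icc (-r) T, ‖x y‖ ≤ M := by
    obtain ⟨M, hM⟩ :=
      ((isCompact_Icc (a := -r) (b := T)).image_of_continuousOn
        (continuous_norm.comp_continuousOn hxK)).bddAbove
    exact ⟨M, fun y hy => hM ⟨y, hy, rfl⟩⟩
  have hUC := ((isCompact_Icc (a := -r) (b := T)).uniformContinuousOn_of_continuous hxK)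
  rw [Metric.uniformContinuousOn_iff] at hUC
  have hLM : 0 ≤ L M := hLnn M
  set ε' := ε / (L M + 1) with hε'
  have hε'pos : 0 < ε' := div_pos hε (by linarith)
  obtain ⟨δ₀, hδ₀, hδ⟩ := hUC ε' hε'pos
  refine ⟨min δ₀ 1, by positivity, ?_⟩
  intro t ht hdist
  have ht0 : (0:ℝ) ≤ t := ht
  have htT : t ≤ T := by
    have := abs_lt.1 (lt_of_lt_of_le hdist (min_le_right _ _))
    rw [hT]; have := this.2; simp only [sub_lt_iff_lt_add] at this; linarith
  have ht₀T : t₀ ≤ T := by rw [hT]; linarith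
  have hmem : ∀ s u : ℝ, 0 ≤ s → s ≤ T → u ∈ Icc (-r) 0 → s + u ∈ Icc (-r) T := by
    intro s u hs hsT hu
    exact ⟨by linarith [hu.1], by linarith [hu.2]⟩
  have hsupM : ∀ s : ℝ, 0 ≤ s → s ≤ T → supN r (seg r x s) ≤ M := by
    intro s hs hsT
    exact supN_le hr (fun u hu => hM _ (hmem s u hs hsT hu))
  have hsegC : ∀ s : ℝ, 0 ≤ s → MemC0 r (seg r x s) := fun s hs => seg_memC0 hx hs
  have hdiff : supN r (seg r x t - seg r x t₀) ≤ ε' := by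
    apply supN_le hr
    intro u hu
    have h1 : t + u ∈ Icc (-r) T := hmem t u ht0 htT hu
    have h2 : t₀ + u ∈ Icc (-r) T := hmem t₀ u ht₀ ht₀T hu
    have hd : dist (t + u) (t₀ + u) < δ₀ := by
      rw [Real.dist_eq]
      have : t + u - (t₀ + u) = t - t₀ := by ring
      rw [this]
      exact lt_of_lt_of_le hdist (min_le_left _ _)
    have := hδ _ h1 _ h2 hd
    rw [dist_eq_norm] at this
    simp only [Pi.sub_apply, seg]
    exact this.le
  have hkey : ‖f (seg r x t) - f (seg r x t₀)‖ ≤ L M * ε' := by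
    refine le_trans (hfLip M _ _ (hsegC t ht0) (hsegC t₀ ht₀) (hsupM t ht0 htT)
      (hsupM t₀ ht₀ ht₀T)) ?_
    exact mul_le_mul_of_nonneg_left hdiff hLM
  rw [dist_eq_norm]
  calc ‖f (seg r x t) - f (seg r x t₀)‖ ≤ L M * ε' := hkey
    _ < (L M + 1) * ε' := by nlinarith
    _ = ε := by rw [hε']; field_simp

lemma norm_f_le {r : ℝ} (hr : 0 < r) {f : (ℝ → Vec n) → Vec n} {L : ℝ → ℝ}
    (hf0 : f 0 = 0) (hLnn : ∀ s, 0 ≤ L s)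
    (hfLip : ∀ R : ℝ, ∀ x y : ℝ → Vec n, MemC0 r x → MemC0 r y → supN r x ≤ R → supN r y ≤ R →
      ‖f x - f y‖ ≤ L R * supN r (x - y))
    {g : ℝ → Vec n} (hg : MemC0 r g) {R : ℝ} (hgR : supN r g ≤ R) : ‖f g‖ ≤ L R * R := by
  have h0 : supN r ((0 : ℝ → Vec n)) = 0 := supN_zero hr
  have h1 : ‖f g - f 0‖ ≤ L R * supN r (g - 0) :=
    hfLip R g 0 hg continuousOn_const hgR (by rw [h0]; exact le_trans (supN_nonneg hr hg) hgR)
  rw [hf0, sub_zero, sub_zero] at h1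
  calc ‖f g‖ ≤ L R * supN r g := h1
    _ ≤ L R * R := mul_le_mul_of_nonneg_left hgR (hLnn R)

lemma lip_est {r : ℝ} (hr : 0 < r) {f : (ℝ → Vec n) → Vec n} {L : ℝ → ℝ}
    (hf0 : f 0 = 0) (hLnn : ∀ s, 0 ≤ L s)
    (hfLip : ∀ R : ℝ, ∀ x y : ℝ → Vec n, MemC0 r x → MemC0 r y → supN r x ≤ R → supN r y ≤ R →
      ‖f x - f y‖ ≤ L R * supN r (x - y))
    {x0 x : ℝ → Vec n} (hsol : IsSol r f x0 x ⊤) {u v R : ℝ} (hu : 0 ≤ u) (huv : u ≤ v)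
    (hR : ∀ s ∈ Icc u v, supN r (seg r x s) ≤ R) : ‖x v - x u‖ ≤ L R * R * (v - u) := by
  have hx : ContinuousOn x (Ici (-r)) :=
    hsol.1.mono (fun y hy => ⟨hy, ENNReal.ofReal_lt_top⟩)
  have hgc : ContinuousOn (fun s => f (seg r x s)) (Ici 0) := g_contOn hr hLnn hfLip hx
  have hint : ∀ a b : ℝ, 0 ≤ a → 0 ≤ b →
      IntervalIntegrable (fun s => f (seg r x s)) volume a b := by
    intro a b ha hb
    apply ContinuousOn.intervalIntegrable
    apply hgc.mono
    intro y hy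
    rcases le_total a b with h | h
    · rw [uIcc_of_le h] at hy; exact le_trans ha hy.1
    · rw [uIcc_of_ge h] at hy; exact le_trans hb hy.1
  have hv0 : (0:ℝ) ≤ v := le_trans hu huv
  have heqv := hsol.2.2 v hv0 ENNReal.ofReal_lt_top
  have hequ := hsol.2.2 u hu ENNReal.ofReal_lt_top
  have hdiff : x v - x u = ∫ s in u..v, f (seg r x s) := by
    rw [heqv, hequ]
    have := intervalIntegral.integral_interval_sub_left (hint 0 v le_rfl hv0) (hint 0 u le_rfl hu)
    rw [← this]
    abel
  rw [hdiff]
  have hbound : ∀ s ∈ Set.uIoc u v, ‖f (seg r x s)‖ ≤ L R * R := by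
    intro s hs
    rw [uIoc_of_le huv] at hs
    have hsmem : s ∈ Icc u v := ⟨hs.1.le, hs.2⟩
    have hs0 : 0 ≤ s := le_trans hu hsmem.1
    exact norm_f_le hr hf0 hLnn hfLip (seg_memC0 hx hs0) (hR s hsmem)
  calc ‖∫ s in u..v, f (seg r x s)‖ ≤ L R * R * |v - u| :=
        intervalIntegral.norm_integral_le_of_norm_le_const hbound
    _ = L R * R * (v - u) := by rw [abs_of_nonneg (by linarith)]
-- ===================== pointwise Hölder estimates =====================

lemma pair_est {r β : ℝ} (hr : 0 < r) (hβ0 : 0 ≤ β) (hβ1 : β ≤ 1)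
    {x : ℝ → Vec n} {K s₀ : ℝ} (hK : 0 ≤ K) (hs₀ : 0 ≤ s₀) {t : ℝ} (ht : 0 ≤ t)
    (hlip : ∀ a b : ℝ, max (t - r) 0 ≤ a → a ≤ b → b ≤ t → ‖x b - x a‖ ≤ K * (b - a))
    (hold : ∀ a b : ℝ, -r ≤ a → a ≤ b → b ≤ 0 → ‖x b - x a‖ ≤ s₀ * (b - a) ^ β)
    {a b : ℝ} (hab : a < b) (ha : t - r ≤ a) (har : -r ≤ a) (hb : b ≤ t) :
    ‖x b - x a‖ ≤ (s₀ * (if t < r then 1 else 0) + K * r ^ (1 - β)) * (b - a) ^ β := by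
  have hba : 0 < b - a := by linarith
  have hbar : b - a ≤ r := by
    rcases le_or_gt 0 a with h0a | h0a
    · linarith
    · have hb0 : b ≤ 0 ∨ 0 < b := le_or_gt b 0
      rcases hb0 with h | h
      · linarith
      · linarith
  have hpowpos : (0:ℝ) < (b - a) ^ β := Real.rpow_pos_of_pos hba β
  have hrpownn : (0:ℝ) ≤ r ^ (1 - β) := (Real.rpow_pos_of_pos hr _).le
  -- generic: for 0 < c ≤ r, K * c ≤ K * r^(1-β) * c^β
  have hgen : ∀ c : ℝ, 0 < c → c ≤ r → K * c ≤ K * r ^ (1 - β) * c ^ β := by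
    intro c hc hcr
    have h1 : c = c ^ (1 - β) * c ^ β := by
      rw [← Real.rpow_add hc, sub_add_cancel, Real.rpow_one]
    have h2 : c ^ (1 - β) ≤ r ^ (1 - β) := Real.rpow_le_rpow hc.le hcr (by linarith)
    calc K * c = K * (c ^ (1 - β) * c ^ β) := by rw [← h1]
      _ = K * c ^ (1 - β) * c ^ β := by ring
      _ ≤ K * r ^ (1 - β) * c ^ β := by
          apply mul_le_mul_of_nonneg_right _ (Real.rpow_pos_of_pos hc β).le
          exact mul_le_mul_of_nonneg_left h2 hK
  rcases le_or_gt 0 a with h0a | h0a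
  · -- both in the "new" part
    have hmax : max (t - r) 0 ≤ a := max_le ha h0a
    have h1 := hlip a b hmax hab.le hb
    have h2 := hgen (b - a) hba hbar
    have h3 : K * r ^ (1 - β) * (b - a) ^ β ≤
        (s₀ * (if t < r then 1 else 0) + K * r ^ (1 - β)) * (b - a) ^ β := by
      apply mul_le_mul_of_nonneg_right _ hpowpos.le
      have : (0:ℝ) ≤ s₀ * (if t < r then 1 else 0) := by positivity
      linarith
    linarith
  · -- a < 0; then t < r
    have htr : t < r := by linarith
    simp only [if_pos htr, mul_one]
    rcases le_or_gt b 0 with hb0 | hb0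
    · -- both in the "old" part
      have h1 := hold a b har hab.le hb0
      have h2 : s₀ * (b - a) ^ β ≤ (s₀ + K * r ^ (1 - β)) * (b - a) ^ β := by
        apply mul_le_mul_of_nonneg_right _ hpowpos.le
        nlinarith
      linarith
    · -- mixed
      have hmax0 : max (t - r) 0 ≤ 0 := max_le (by linarith) le_rfl
      have h1 : ‖x b - x 0‖ ≤ K * (b - 0) := hlip 0 b hmax0 hb0.le hb
      have h2 : ‖x 0 - x a‖ ≤ s₀ * (0 - a) ^ β := hold a 0 har h0a.le le_rfl
      have htri : ‖x b - x a‖ ≤ ‖x b - x 0‖ + ‖x 0 - x a‖ := by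
        have := norm_sub_le_norm_sub_add_norm_sub (x b) (x 0) (x a)
        exact this
      have h3 : K * (b - 0) ≤ K * r ^ (1 - β) * b ^ β := by
        have := hgen b hb0 (by linarith)
        simpa using this
      have h4 : b ^ β ≤ (b - a) ^ β := Real.rpow_le_rpow hb0.le (by linarith) hβ0
      have h5 : (0 - a) ^ β ≤ (b - a) ^ β := Real.rpow_le_rpow (by linarith) (by linarith) hβ0
      have h6 : K * r ^ (1 - β) * b ^ β ≤ K * r ^ (1 - β) * (b - a) ^ β :=
        mul_le_mul_of_nonneg_left h4 (by positivity)
      have h7 : s₀ * (0 - a) ^ β ≤ s₀ * (b - a) ^ β := mul_le_mul_of_nonneg_left h5 hs₀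
      calc ‖x b - x a‖ ≤ ‖x b - x 0‖ + ‖x 0 - x a‖ := htri
        _ ≤ K * (b - 0) + s₀ * (0 - a) ^ β := add_le_add h1 h2
        _ ≤ K * r ^ (1 - β) * (b - a) ^ β + s₀ * (b - a) ^ β := by linarith
        _ = (s₀ + K * r ^ (1 - β)) * (b - a) ^ β := by ring

-- ===================== Hölder embedding =====================

lemma embed {r α β : ℝ} (hr : 0 < r) (hαβ : α ≤ β) {g : ℝ → Vec n} (hg : MemHol r β g) :
    MemHol r α g ∧ holderNorm r α g ≤ max 1 (r ^ (β - α)) * holderNorm r β g := by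
  set D := max 1 (r ^ (β - α)) with hD
  have hD1 : (1:ℝ) ≤ D := le_max_left _ _
  have hD0 : (0:ℝ) ≤ D := by linarith
  set S := sSup (hRatios β (Icc (-r) 0) g) with hS
  have hSnn : 0 ≤ S := sSup_hRatios_nonneg hr hg.2
  have hptw : ∀ u ∈ Icc (-r) 0, ∀ v ∈ Icc (-r) 0, u ≠ v →
      ‖g u - g v‖ / |u - v| ^ α ≤ D * S := by
    intro u hu v hv huv
    set d := |u - v| with hd
    have hdpos : 0 < d := abs_pos.2 (sub_ne_zero.2 huv)
    have hdr : d ≤ r := by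
      rw [hd, abs_sub_le_iff]
      constructor <;> [skip; skip] <;> · linarith [hu.1, hu.2, hv.1, hv.2]
    have hratβ : ‖g u - g v‖ / d ^ β ≤ S :=
      le_csSup hg.2 ⟨u, hu, v, hv, huv, rfl⟩
    have hnum : ‖g u - g v‖ ≤ S * d ^ β := by
      rw [div_le_iff₀ (Real.rpow_pos_of_pos hdpos β)] at hratβ
      exact hratβ
    have hdpow : d ^ (β - α) ≤ D := by
      rcases le_or_gt d 1 with h | h
      · exact le_trans (Real.rpow_le_one hdpos.le h (by linarith)) hD1
      · exact le_trans (Real.rpow_le_rpow hdpos.le hdr (by linarith)) (le_max_right _ _)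
    have hkey : ‖g u - g v‖ / d ^ α ≤ S * d ^ (β - α) := by
      rw [div_le_iff₀ (Real.rpow_pos_of_pos hdpos α)]
      calc ‖g u - g v‖ ≤ S * d ^ β := hnum
        _ = S * d ^ (β - α) * d ^ α := by
            rw [mul_assoc, ← Real.rpow_add hdpos]
            ring_nf
    calc ‖g u - g v‖ / d ^ α ≤ S * d ^ (β - α) := hkey
      _ ≤ S * D := mul_le_mul_of_nonneg_left hdpow hSnn
      _ = D * S := mul_comm _ _
  have hbdd : BddAbove (hRatios α (Icc (-r) 0) g) := by
    refine ⟨D * S, ?_⟩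
    rintro c ⟨u, hu, v, hv, huv, rfl⟩
    exact hptw u hu v hv huv
  refine ⟨⟨hg.1, hbdd⟩, ?_⟩
  have hsup : supN r g ≤ D * holderNorm r β g := by
    calc supN r g ≤ holderNorm r β g := le_max_left _ _
      _ = 1 * holderNorm r β g := (one_mul _).symm
      _ ≤ D * holderNorm r β g := by
          apply mul_le_mul_of_nonneg_right hD1 (holderNorm_nonneg β hr hg.1)
  have hssup : sSup (hRatios α (Icc (-r) 0) g) ≤ D * holderNorm r β g := by
    refine le_trans (sSup_hRatios_le hr hptw) ?_
    exact mul_le_mul_of_nonneg_left (le_max_right _ _) hD0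
  exact max_le hsup hssup
/-- UGAS in `C^{0,1-1/p}` implies UGAS in `C^{0,1-1/q}` for
`1 < p ≤ q ≤ ∞`, for a forward-complete system on `C⁰`. -/
theorem stmt6 (n : ℕ) (hn : 1 ≤ n) (r : ℝ) (hr : 0 < r)
    (f : (ℝ → Vec n) → Vec n) (L : ℝ → ℝ) (hf : GoodRHS r f L)
    (p q : ℝ≥0∞) (hp : 1 < p) (hpq : p ≤ q)
    (hFC : ∀ x0 : ℝ → Vec n, MemC0 r x0 → ∃ x : ℝ → Vec n, IsSol r f x0 x ⊤)
    (σ : ℝ → ℝ → ℝ) (hσ : ClassKL σ)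
    (hUG : ∀ x0 x : ℝ → Vec n, MemHol r (hexp p) x0 → IsSol r f x0 x ⊤ →
      ∀ t : ℝ, 0 ≤ t → holderNorm r (hexp p) (seg r x t) ≤ σ (holderNorm r (hexp p) x0) t) :
    ∃ ω : ℝ → ℝ → ℝ, ClassKL ω ∧ ∀ x0 x : ℝ → Vec n, MemHol r (hexp q) x0 →
      IsSol r f x0 x ⊤ →
      ∀ t : ℝ, 0 ≤ t → holderNorm r (hexp q) (seg r x t) ≤ ω (holderNorm r (hexp q) x0) t := by
  obtain ⟨hf0, hfdep, hLmono, hLnn, hfLip⟩ := hf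
  obtain ⟨hσ0, hσs, hσt⟩ := hσ
  set α := hexp p with hα
  set β := hexp q with hβ
  have hqinv : (0:ℝ) ≤ (q.toReal)⁻¹ := by positivity
  have hβ1 : β ≤ 1 := by rw [hβ]; unfold hexp; linarith
  have hβ0 : 0 ≤ β := by
    rw [hβ]; unfold hexp
    rcases eq_or_ne q ⊤ with hq | hq
    · simp [hq]
    · have hq1 : (1:ℝ) < q.toReal := by
        have := (ENNReal.toReal_lt_toReal (by simp) hq).2 (lt_of_lt_of_le hp hpq)
        simpa using this
      have : (q.toReal)⁻¹ ≤ 1 := by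
        rw [inv_le_one_iff₀]; right; linarith
      linarith
  have hαβ : α ≤ β := by
    rw [hα, hβ]; unfold hexp
    have : (q.toReal)⁻¹ ≤ (p.toReal)⁻¹ := by
      rcases eq_or_ne q ⊤ with hq | hq
      · simp [hq]
      · have hpt : p ≠ ⊤ := fun h => hq (top_le_iff.1 (h ▸ hpq))
        have hp1 : (1:ℝ) < p.toReal := by
          have := (ENNReal.toReal_lt_toReal (by simp) hpt).2 hp
          simpa using this
        have hle : p.toReal ≤ q.toReal := ENNReal.toReal_mono hq hpq
        exact inv_anti₀ (by linarith) hle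
    linarith
  set C := max 1 (r ^ (β - α)) with hC
  have hC1 : (1:ℝ) ≤ C := le_max_left _ _
  have hCpos : (0:ℝ) < C := by linarith
  set rp := r ^ (1 - β) with hrp
  have hrpnn : (0:ℝ) ≤ rp := (Real.rpow_pos_of_pos hr _).le
  have hCs : ∀ s : ℝ, 0 ≤ s → 0 ≤ C * s := fun s hs => mul_nonneg hCpos.le hs
  have hθnn : ∀ t : ℝ, (0:ℝ) ≤ max 0 (min 1 (2 - t / r)) := fun t => le_max_left _ _
  have hθone : ∀ t : ℝ, t ≤ r → max 0 (min 1 (2 - t / r)) = 1 := by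
    intro t htr
    have h1 : t / r ≤ 1 := (div_le_one hr).2 htr
    rw [min_eq_left (by linarith), max_eq_right zero_le_one]
  have hθanti : ∀ t1 t2 : ℝ, t1 ≤ t2 →
      max 0 (min 1 (2 - t2 / r)) ≤ max 0 (min 1 (2 - t1 / r)) := by
    intro t1 t2 h12
    apply max_le_max le_rfl
    apply min_le_min le_rfl
    have : t1 / r ≤ t2 / r := by gcongr
    linarith
  refine ⟨fun s t => σ (C * s) (max (t - r) 0) +
      ell L (σ (C * s) 0) * σ (C * s) (max (t - r) 0) * rp +
      s * max 0 (min 1 (2 - t / r)), ⟨?_, ?_, ?_⟩, ?_⟩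
  · -- nonnegativity
    intro s t hs ht
    have hρnn : 0 ≤ σ (C * s) (max (t - r) 0) := hσ0 _ _ (hCs s hs) (le_max_right _ _)
    have hℓnn := ell_nonneg hLmono hLnn (σ (C * s) 0)
    have := hθnn t
    positivity
  · -- s-regularity
    intro t ht
    have hmax : (0:ℝ) ≤ max (t - r) 0 := le_max_right _ _
    obtain ⟨hc1, hm1, hz1⟩ := hσs _ hmax
    obtain ⟨hc0, hm0, hz0⟩ := hσs 0 le_rfl
    have hmul : ContinuousOn (fun s : ℝ => C * s) (Ici 0) :=
      (continuous_const.mul continuous_id).continuousOn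
    have hmaps : MapsTo (fun s : ℝ => C * s) (Ici 0) (Ici 0) := fun s hs => hCs s hs
    refine ⟨?_, ?_, ?_⟩
    · have hcρ : ContinuousOn (fun s : ℝ => σ (C * s) (max (t - r) 0)) (Ici 0) :=
        hc1.comp hmul hmaps
      have hc0' : ContinuousOn (fun s : ℝ => σ (C * s) 0) (Ici 0) := hc0.comp hmul hmaps
      have hcℓ : ContinuousOn (fun s : ℝ => ell L (σ (C * s) 0)) (Ici 0) :=
        (ell_continuous hLmono).comp_continuousOn hc0'
      exact (hcρ.add ((hcℓ.mul hcρ).mul continuousOn_const)).add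
        (continuousOn_id.mul continuousOn_const)
    · intro s1 hs1 s2 hs2 h12
      simp only []
      have hs1' : 0 ≤ s1 := hs1
      have hs2' : 0 ≤ s2 := hs2
      have hClt : C * s1 < C * s2 := by nlinarith
      have hρlt : σ (C * s1) (max (t - r) 0) < σ (C * s2) (max (t - r) 0) :=
        hm1 (mem_Ici.2 (hCs _ hs1')) (mem_Ici.2 (hCs _ hs2')) hClt
      have hσle : σ (C * s1) 0 ≤ σ (C * s2) 0 :=
        (hm0 (mem_Ici.2 (hCs _ hs1')) (mem_Ici.2 (hCs _ hs2')) hClt).le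
      have hℓle : ell L (σ (C * s1) 0) ≤ ell L (σ (C * s2) 0) := ell_mono hLmono hσle
      have hρ1nn : 0 ≤ σ (C * s1) (max (t - r) 0) := hσ0 _ _ (hCs _ hs1') hmax
      have hℓnn2 := ell_nonneg hLmono hLnn (σ (C * s2) 0)
      have ht2 : ell L (σ (C * s1) 0) * σ (C * s1) (max (t - r) 0) * rp ≤
          ell L (σ (C * s2) 0) * σ (C * s2) (max (t - r) 0) * rp :=
        mul_le_mul_of_nonneg_right (mul_le_mul hℓle hρlt.le hρ1nn hℓnn2) hrpnn
      have ht3 : s1 * max 0 (min 1 (2 - t / r)) ≤ s2 * max 0 (min 1 (2 - t / r)) :=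
        mul_le_mul_of_nonneg_right h12.le (hθnn t)
      exact add_lt_add_of_lt_of_le (add_lt_add_of_lt_of_le hρlt ht2) ht3
    · simp only [mul_zero, hz1, hz0, zero_mul, add_zero, zero_add]
  · -- t-regularity
    intro s hs
    have hCs' : 0 ≤ C * s := hCs s hs
    constructor
    · intro t1 ht1 t2 ht2 h12
      simp only []
      have hmax12 : max (t1 - r) 0 ≤ max (t2 - r) 0 := max_le_max (by linarith) le_rfl
      have hρanti : σ (C * s) (max (t2 - r) 0) ≤ σ (C * s) (max (t1 - r) 0) :=
        (hσt _ hCs').1 (mem_Ici.2 (le_max_right _ _)) (mem_Ici.2 (le_max_right _ _)) hmax12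
      have hθle := hθanti t1 t2 h12
      have hℓnn := ell_nonneg hLmono hLnn (σ (C * s) 0)
      exact add_le_add (add_le_add hρanti (mul_le_mul_of_nonneg_right
        (mul_le_mul_of_nonneg_left hρanti hℓnn) hrpnn)) (mul_le_mul_of_nonneg_left hθle hs)
    · have htop : Tendsto (fun t : ℝ => max (t - r) 0) atTop atTop := by
        apply tendsto_atTop_mono (fun t => le_max_left (t - r) 0)
        simpa [sub_eq_add_neg] using tendsto_atTop_add_const_right atTop (-r) tendsto_id
      have hρ0 : Tendsto (fun t : ℝ => σ (C * s) (max (t - r) 0)) atTop (nhds 0) :=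
        ((hσt _ hCs').2).comp htop
      have h2 : Tendsto (fun t : ℝ => ell L (σ (C * s) 0) * σ (C * s) (max (t - r) 0) * rp)
          atTop (nhds 0) := by
        have := (hρ0.const_mul (ell L (σ (C * s) 0))).mul_const rp
        simpa using this
      have h3 : Tendsto (fun t : ℝ => s * max 0 (min 1 (2 - t / r))) atTop (nhds 0) := by
        apply Tendsto.congr' _ (tendsto_const_nhds : Tendsto (fun _ : ℝ => (0:ℝ)) atTop (nhds 0))
        refine eventually_atTop.2 ⟨2 * r, ?_⟩
        intro t ht'
        have h1 : (2:ℝ) ≤ t / r := (le_div_iff₀ hr).2 (by linarith)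
        have h4 : min 1 (2 - t / r) ≤ 0 := le_trans (min_le_right _ _) (by linarith)
        show (0:ℝ) = s * (0 ⊔ 1 ⊓ (2 - t / r))
        rw [max_eq_left h4, mul_zero]
      have := (hρ0.add h2).add h3
      simpa using this
  · -- the UGAS estimate
    intro x0 x hx0 hsol t ht
    obtain ⟨hmemα, hembed⟩ := embed hr hαβ hx0
    set s₀ := holderNorm r β x0 with hs₀def
    have hs₀nn : 0 ≤ s₀ := holderNorm_nonneg β hr hx0.1
    have hxc : ContinuousOn x (Ici (-r)) :=
      hsol.1.mono (fun y hy => ⟨hy, ENNReal.ofReal_lt_top⟩)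
    have hαnn : 0 ≤ holderNorm r α x0 := holderNorm_nonneg α hr hx0.1
    have hCs₀ : 0 ≤ C * s₀ := hCs s₀ hs₀nn
    have hsupb : ∀ u : ℝ, 0 ≤ u → supN r (seg r x u) ≤ σ (C * s₀) u := by
      intro u hu
      have h1 := hUG x0 x hmemα hsol u hu
      have h2 : supN r (seg r x u) ≤ holderNorm r α (seg r x u) := le_max_left _ _
      have h3 : σ (holderNorm r α x0) u ≤ σ (C * s₀) u :=
        (hσs u hu).2.1.monotoneOn (mem_Ici.2 hαnn) (mem_Ici.2 hCs₀) hembed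
      linarith
    set R := σ (C * s₀) (max (t - r) 0) with hRdef
    have hRnn : 0 ≤ R := hσ0 _ _ hCs₀ (le_max_right _ _)
    set K := L R * R with hKdef
    have hKnn : 0 ≤ K := mul_nonneg (hLnn R) hRnn
    have hlip : ∀ a b : ℝ, max (t - r) 0 ≤ a → a ≤ b → b ≤ t → ‖x b - x a‖ ≤ K * (b - a) := by
      intro a b hma hab hbt
      have ha0 : 0 ≤ a := le_trans (le_max_right _ _) hma
      apply lip_est hr hf0 hLnn hfLip hsol ha0 hab
      intro s' hs'
      have hs'0 : 0 ≤ s' := le_trans ha0 hs'.1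
      refine le_trans (hsupb s' hs'0) ?_
      exact (hσt _ hCs₀).1 (mem_Ici.2 (le_max_right _ _)) (mem_Ici.2 hs'0)
        (le_trans hma hs'.1)
    have hold : ∀ a b : ℝ, -r ≤ a → a ≤ b → b ≤ 0 → ‖x b - x a‖ ≤ s₀ * (b - a) ^ β := by
      intro a b har hab hb0
      have hamem : a ∈ Icc (-r) 0 := ⟨har, by linarith⟩
      have hbmem : b ∈ Icc (-r) 0 := ⟨by linarith, hb0⟩
      rcases eq_or_lt_of_le hab with rfl | hab'
      · simp only [sub_self, norm_zero]
        positivity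
      · have hxa : x a = x0 a := hsol.2.1 hamem
        have hxb : x b = x0 b := hsol.2.1 hbmem
        have hba : (0:ℝ) < b - a := by linarith
        have habs : |b - a| = b - a := abs_of_pos hba
        have hrat : ‖x0 b - x0 a‖ / |b - a| ^ β ≤ s₀ :=
          le_trans (le_csSup hx0.2 ⟨b, hbmem, a, hamem, ne_of_gt hab', rfl⟩)
            (le_max_right _ _)
        rw [div_le_iff₀ (Real.rpow_pos_of_pos (abs_pos.2 (sub_ne_zero.2 (ne_of_gt hab'))) β)]
          at hrat
        rw [hxa, hxb]
        calc ‖x0 b - x0 a‖ ≤ s₀ * |b - a| ^ β := hrat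
          _ = s₀ * (b - a) ^ β := by rw [habs]
    have hsem : sSup (hRatios β (Icc (-r) 0) (seg r x t)) ≤
        s₀ * max 0 (min 1 (2 - t / r)) + K * rp := by
      apply sSup_hRatios_le hr
      have key : ∀ u v : ℝ, u ∈ Icc (-r) 0 → v ∈ Icc (-r) 0 → v < u →
          ‖seg r x t u - seg r x t v‖ / |u - v| ^ β ≤
            s₀ * max 0 (min 1 (2 - t / r)) + K * rp := by
        intro u v hu hv hvu
        have hab : t + v < t + u := by linarith
        have hba : (0:ℝ) < u - v := by linarith
        have hest := pair_est hr hβ0 hβ1 hKnn hs₀nn ht hlip hold hab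
          (by linarith [hv.1] : t - r ≤ t + v) (by linarith [hv.1] : -r ≤ t + v)
          (by linarith [hu.2] : t + u ≤ t)
        have hdiff : t + u - (t + v) = u - v := by ring
        rw [hdiff] at hest
        have habs : |u - v| = u - v := abs_of_pos hba
        have hpow : (0:ℝ) < (u - v) ^ β := Real.rpow_pos_of_pos hba β
        rw [div_le_iff₀ (by rw [habs]; exact hpow)]
        have hind : s₀ * (if t < r then 1 else 0) ≤ s₀ * max 0 (min 1 (2 - t / r)) := by
          split_ifs with h
          · rw [hθone t h.le]
          · simp only [mul_zero]
            exact mul_nonneg hs₀nn (hθnn t)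
        have hseg : seg r x t u - seg r x t v = x (t + u) - x (t + v) := rfl
        calc ‖seg r x t u - seg r x t v‖ = ‖x (t + u) - x (t + v)‖ := by rw [hseg]
          _ ≤ (s₀ * (if t < r then 1 else 0) + K * rp) * (u - v) ^ β := hest
          _ ≤ (s₀ * max 0 (min 1 (2 - t / r)) + K * rp) * (u - v) ^ β :=
              mul_le_mul_of_nonneg_right (by linarith) hpow.le
          _ = (s₀ * max 0 (min 1 (2 - t / r)) + K * rp) * |u - v| ^ β := by rw [habs]
      intro u hu v hv huv
      rcases lt_or_gt_of_ne huv with h | h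
      · have := key v u hv hu h
        rw [norm_sub_rev, abs_sub_comm] at this
        exact this
      · exact key u v hu hv h
    have hsup : supN r (seg r x t) ≤ R := by
      refine le_trans (hsupb t ht) ?_
      exact (hσt _ hCs₀).1 (mem_Ici.2 (le_max_right _ _)) (mem_Ici.2 ht)
        (max_le (by linarith) ht)
    have hKle : K * rp ≤ ell L (σ (C * s₀) 0) * R * rp := by
      apply mul_le_mul_of_nonneg_right _ hrpnn
      apply mul_le_mul _ le_rfl hRnn (ell_nonneg hLmono hLnn _)
      calc L R ≤ ell L R := le_ell hLmono R
        _ ≤ ell L (σ (C * s₀) 0) := by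
            apply ell_mono hLmono
            exact (hσt _ hCs₀).1 (mem_Ici.2 le_rfl) (mem_Ici.2 (le_max_right _ _))
              (le_max_right _ _)
    have hℓRnn : 0 ≤ ell L (σ (C * s₀) 0) * R * rp :=
      mul_nonneg (mul_nonneg (ell_nonneg hLmono hLnn _) hRnn) hrpnn
    have hθtnn : 0 ≤ s₀ * max 0 (min 1 (2 - t / r)) := mul_nonneg hs₀nn (hθnn t)
    simp only []
    apply max_le
    · linarith [hsup]
    · linarith [hsem, hKle]
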